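/- arXiv:1605.08898 — 3 statements merged into one kernel-verified Lean document; each statement's English description precedes it below -/
import Mathlib

section
/- Let Σ be an n×n symmetric positive definite matrix, and define b_j (j = 0,…,n−1) as above with v_j = b_jᵀ Σ b_j. Then the precision matrix admits the decomposition Σ⁻¹ = ∑_{j=0}^{n−1} b_j b_jᵀ / v_j. -/
open Matrix

/-- Leading principal `j × j` submatrix. -/
noncomputable def lead {n : ℕ} (S : Matrix (Fin n) (Fin n) ℝ) (j : ℕ) (h : j ≤ n) :
    Matrix (Fin j) (Fin j) ℝ := S.submatrix (Fin.castLE h) (Fin.castLE h)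

/-- First `j` entries of column `j+1` (0-indexed: column `j`). -/
def colv {n : ℕ} (S : Matrix (Fin n) (Fin n) ℝ) (j : ℕ) (h : j < n) :
    Fin j → ℝ := fun i => S (Fin.castLE h.le i) ⟨j, h⟩

/-- The vector `b_j`: first `j` entries are `-Σ_jj⁻¹ σ_j`, entry `j+1` is `1`, rest are `0`. -/
noncomputable def bvec {n : ℕ} (S : Matrix (Fin n) (Fin n) ℝ) (j : ℕ) (h : j < n) :
    Fin n → ℝ := fun i =>
  if hij : (i : ℕ) < j then -(((lead S j h.le)⁻¹).mulVec (colv S j h)) ⟨i, hij⟩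
  else if (i : ℕ) = j then 1 else 0

namespace PrecisionAux

variable {n : ℕ}

lemma bvec_lt (S : Matrix (Fin n) (Fin n) ℝ) {j : ℕ} (h : j < n) {i : Fin n}
    (hi : (i : ℕ) < j) :
    bvec S j h i = -(((lead S j h.le)⁻¹).mulVec (colv S j h)) ⟨i, hi⟩ := by
  simp [bvec, hi]

lemma bvec_self (S : Matrix (Fin n) (Fin n) ℝ) {j : ℕ} (h : j < n) {i : Fin n}
    (hi : (i : ℕ) = j) : bvec S j h i = 1 := by
  unfold bvec
  rw [dif_neg (by omega), if_pos hi]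

lemma bvec_gt (S : Matrix (Fin n) (Fin n) ℝ) {j : ℕ} (h : j < n) {i : Fin n}
    (hi : j < (i : ℕ)) : bvec S j h i = 0 := by
  unfold bvec
  rw [dif_neg (by omega), if_neg (by omega)]

lemma sum_eq_sum_lt {j : ℕ} (h : j ≤ n) (f : Fin n → ℝ)
    (hf : ∀ i : Fin n, ¬ (i : ℕ) < j → f i = 0) :
    ∑ i, f i = ∑ i : Fin j, f (Fin.castLE h i) := by
  rw [eq_comm]
  have h1 : ∑ i : Fin j, f (Fin.castLE h i)
      = ∑ i ∈ Finset.univ.map (Fin.castLEEmb h), f i := by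
    rw [Finset.sum_map]; rfl
  rw [h1]
  apply Finset.sum_subset (Finset.subset_univ _)
  intro i _ hi
  apply hf
  intro hlt
  exact hi (Finset.mem_map.mpr ⟨⟨i, hlt⟩, Finset.mem_univ _, rfl⟩)

lemma dot_ext (S : Matrix (Fin n) (Fin n) ℝ) {j : ℕ} (h : j ≤ n) (x : Fin j → ℝ) :
    (fun i : Fin n => if hi : (i : ℕ) < j then x ⟨i, hi⟩ else 0) ⬝ᵥ
      S *ᵥ (fun i : Fin n => if hi : (i : ℕ) < j then x ⟨i, hi⟩ else 0)
      = x ⬝ᵥ (lead S j h) *ᵥ x := by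
  set y : Fin n → ℝ := fun i => if hi : (i : ℕ) < j then x ⟨i, hi⟩ else 0 with hy
  show y ⬝ᵥ S *ᵥ y = _
  unfold dotProduct
  rw [sum_eq_sum_lt h _ (fun i hi => by simp [hy, hi])]
  apply Finset.sum_congr rfl
  intro i _
  have hyx : y (Fin.castLE h i) = x i := by simp [hy, i.isLt]
  rw [hyx]
  congr 1
  show (S *ᵥ y) (Fin.castLE h i) = ((lead S j h) *ᵥ x) i
  simp only [mulVec, dotProduct]
  rw [sum_eq_sum_lt h _ (fun l hl => by simp [hy, hl])]
  apply Finset.sum_congr rfl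
  intro l _
  simp [hy, l.isLt, lead]

lemma lead_posDef (S : Matrix (Fin n) (Fin n) ℝ) (hpd : S.PosDef) {j : ℕ} (h : j ≤ n) :
    (lead S j h).PosDef := by
  refine Matrix.PosDef.of_dotProduct_mulVec_pos (hpd.1.submatrix _) (fun x hx => ?_)
  have hx' : (fun i : Fin n => if hi : (i : ℕ) < j then x ⟨i, hi⟩ else 0) ≠ 0 := by
    intro h0
    apply hx
    funext k
    have := congrFun h0 (Fin.castLE h k)
    simpa [k.isLt] using this
  have h2 := hpd.dotProduct_mulVec_pos hx'
  rwa [star_trivial, dot_ext S h x] at h2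

lemma Ssymm (S : Matrix (Fin n) (Fin n) ℝ) (hpd : S.PosDef) : Sᵀ = S := by
  ext i k
  have := congrFun (congrFun hpd.1 i) k
  simpa using this

/-- Key lemma: `(S bⱼ)ᵢ = 0` for `i < j`. -/
lemma mulVec_bvec_eq_zero (S : Matrix (Fin n) (Fin n) ℝ) (hpd : S.PosDef) (j : Fin n)
    {i : Fin n} (hij : (i : ℕ) < (j : ℕ)) :
    S.mulVec (bvec S j j.isLt) i = 0 := by
  have hA : IsUnit (lead S (j : ℕ) j.isLt.le).det :=
    (lead_posDef S hpd j.isLt.le).det_pos.ne'.isUnit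
  set x : Fin (j : ℕ) → ℝ := ((lead S (j : ℕ) j.isLt.le)⁻¹).mulVec (colv S j j.isLt) with hx
  have hAx : (lead S (j : ℕ) j.isLt.le) *ᵥ x = colv S (j : ℕ) j.isLt := by
    rw [hx, mulVec_mulVec, Matrix.mul_nonsing_inv _ hA, one_mulVec]
  have hjn : (j : ℕ) + 1 ≤ n := j.isLt
  show (S *ᵥ bvec S j j.isLt) i = 0
  simp only [mulVec, dotProduct]
  rw [sum_eq_sum_lt hjn _ (fun l hl => by rw [bvec_gt S j.isLt (by omega), mul_zero]),
    Fin.sum_univ_castSucc]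
  have hlast : (Fin.castLE hjn (Fin.last (j : ℕ))) = j := by
    apply Fin.ext; simp
  have hsum : ∀ l : Fin (j : ℕ),
      S i (Fin.castLE hjn l.castSucc) * bvec S (j : ℕ) j.isLt (Fin.castLE hjn l.castSucc)
        = -(lead S (j : ℕ) j.isLt.le ⟨i, hij⟩ l * x l) := by
    intro l
    have hl : ((Fin.castLE hjn l.castSucc : Fin n) : ℕ) < (j : ℕ) := by simp [l.isLt]
    rw [bvec_lt S j.isLt hl]
    have h1 : S i (Fin.castLE hjn l.castSucc) = lead S (j : ℕ) j.isLt.le ⟨i, hij⟩ l := by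
      simp only [lead, submatrix_apply]
      congr 1 <;> apply Fin.ext <;> simp
    have h2 : (⟨((Fin.castLE hjn l.castSucc : Fin n) : ℕ), hl⟩ : Fin (j : ℕ)) = l := by
      apply Fin.ext; simp
    rw [h1, h2]
    ring
  have hAxi : ∑ l, lead S (j : ℕ) j.isLt.le ⟨i, hij⟩ l * x l = colv S (j : ℕ) j.isLt ⟨i, hij⟩ := by
    have := congrFun hAx ⟨i, hij⟩
    simpa [mulVec, dotProduct] using this
  have hcolv : colv S (j : ℕ) j.isLt ⟨i, hij⟩ = S i j := by
    simp only [colv]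
    congr 1 <;> apply Fin.ext <;> simp
  rw [Finset.sum_congr rfl (fun l _ => hsum l), hlast,
    bvec_self S j.isLt (by simp), Finset.sum_neg_distrib, hAxi, hcolv]
  ring

lemma offdiag_zero (S : Matrix (Fin n) (Fin n) ℝ) (hpd : S.PosDef) (j k : Fin n)
    (hjk : (j : ℕ) < (k : ℕ)) :
    bvec S j j.isLt ⬝ᵥ S *ᵥ bvec S k k.isLt = 0 := by
  unfold dotProduct
  apply Finset.sum_eq_zero
  intro i _
  by_cases hik : (i : ℕ) < (k : ℕ)
  · rw [mulVec_bvec_eq_zero S hpd k hik, mul_zero]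
  · rw [bvec_gt S j.isLt (by omega), zero_mul]

end PrecisionAux

open PrecisionAux in
theorem precision_decomposition {n : ℕ} (S : Matrix (Fin n) (Fin n) ℝ) (hpd : S.PosDef) :
    S⁻¹ = ∑ j : Fin n,
      (bvec S j j.isLt ⬝ᵥ S.mulVec (bvec S j j.isLt))⁻¹ •
        vecMulVec (bvec S j j.isLt) (bvec S j j.isLt) := by
  classical
  set b : Fin n → Fin n → ℝ := fun j => bvec S j j.isLt with hb
  set v : Fin n → ℝ := fun j => b j ⬝ᵥ S *ᵥ b j with hv
  set B : Matrix (Fin n) (Fin n) ℝ := Matrix.of (fun i j => b j i) with hB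
  -- positivity of v
  have hbne : ∀ j : Fin n, b j ≠ 0 := by
    intro j h0
    have := congrFun h0 j
    rw [hb] at this
    simp only [Pi.zero_apply] at this
    rw [bvec_self S j.isLt rfl] at this
    exact one_ne_zero this
  have hvpos : ∀ j, 0 < v j := by
    intro j
    have := hpd.dotProduct_mulVec_pos (hbne j)
    rwa [star_trivial] at this
  have hvne : ∀ j, v j ≠ 0 := fun j => (hvpos j).ne'
  -- B is unit upper triangular
  have htri : B.BlockTriangular id := by
    intro i j hij
    exact bvec_gt S j.isLt hij
  have hdet : B.det = 1 := by
    rw [Matrix.det_of_upperTriangular htri]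
    apply Finset.prod_eq_one
    intro i _
    exact bvec_self S i.isLt rfl
  have hBt : IsUnit Bᵀ.det := by
    rw [Matrix.det_transpose, hdet]; exact isUnit_one
  -- Bᵀ S B = diagonal v
  have hD : Bᵀ * S * B = Matrix.diagonal v := by
    ext j k
    rw [Matrix.mul_assoc]
    have hentry : (Bᵀ * (S * B)) j k = b j ⬝ᵥ S *ᵥ b k := by
      simp only [Matrix.mul_apply, Matrix.transpose_apply, mulVec, dotProduct, hB,
        Matrix.of_apply]
    rw [hentry]
    rcases lt_trichotomy (j : ℕ) (k : ℕ) with h | h | h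
    · rw [offdiag_zero S hpd j k h, Matrix.diagonal_apply_ne _ (by intro he; rw [he] at h; omega)]
    · have hjk : j = k := Fin.ext h
      subst hjk
      rw [Matrix.diagonal_apply_eq]
    · have hsym : b j ⬝ᵥ S *ᵥ b k = b k ⬝ᵥ S *ᵥ b j := by
        rw [Matrix.dotProduct_mulVec, ← Matrix.mulVec_transpose, Ssymm S hpd,
          dotProduct_comm]
      rw [hsym, offdiag_zero S hpd k j h,
        Matrix.diagonal_apply_ne _ (by intro he; rw [he] at h; omega)]
  -- the sum equals B * diagonal v⁻¹ * Bᵀ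
  have hM : (∑ j : Fin n, (v j)⁻¹ • vecMulVec (b j) (b j))
      = B * Matrix.diagonal (fun j => (v j)⁻¹) * Bᵀ := by
    ext i k
    rw [Matrix.mul_apply]
    simp only [Matrix.sum_apply, Matrix.smul_apply, vecMulVec_apply, smul_eq_mul,
      Matrix.mul_diagonal, Matrix.transpose_apply, hB, Matrix.of_apply]
    apply Finset.sum_congr rfl
    intro j _
    ring
  -- right inverse
  have hright : S * (B * Matrix.diagonal (fun j => (v j)⁻¹) * Bᵀ) = 1 := by
    have h1 : Bᵀ * (S * (B * Matrix.diagonal (fun j => (v j)⁻¹) * Bᵀ)) = Bᵀ * 1 := by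
      calc Bᵀ * (S * (B * Matrix.diagonal (fun j => (v j)⁻¹) * Bᵀ))
          = (Bᵀ * S * B) * Matrix.diagonal (fun j => (v j)⁻¹) * Bᵀ := by
            simp only [Matrix.mul_assoc]
        _ = Matrix.diagonal v * Matrix.diagonal (fun j => (v j)⁻¹) * Bᵀ := by rw [hD]
        _ = 1 * Bᵀ := by
            rw [Matrix.diagonal_mul_diagonal]
            have hone : (fun j => v j * (v j)⁻¹) = fun _ => (1 : ℝ) :=
              funext fun j => mul_inv_cancel₀ (hvne j)
            rw [hone, Matrix.diagonal_one]
        _ = Bᵀ * 1 := by rw [Matrix.one_mul, Matrix.mul_one]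
    calc S * (B * Matrix.diagonal (fun j => (v j)⁻¹) * Bᵀ)
        = (Bᵀ⁻¹ * Bᵀ) * (S * (B * Matrix.diagonal (fun j => (v j)⁻¹) * Bᵀ)) := by
          rw [Matrix.nonsing_inv_mul _ hBt, Matrix.one_mul]
      _ = Bᵀ⁻¹ * (Bᵀ * (S * (B * Matrix.diagonal (fun j => (v j)⁻¹) * Bᵀ))) := by
          rw [Matrix.mul_assoc]
      _ = Bᵀ⁻¹ * (Bᵀ * 1) := by rw [h1]
      _ = 1 := by rw [Matrix.mul_one, Matrix.nonsing_inv_mul _ hBt]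
  calc S⁻¹ = B * Matrix.diagonal (fun j => (v j)⁻¹) * Bᵀ := Matrix.inv_eq_right_inv hright
    _ = ∑ j : Fin n, (v j)⁻¹ • vecMulVec (b j) (b j) := hM.symm
end

section
/- (Eckart–Young–Mirsky for symmetric matrices in Frobenius norm) Let S be an m×m real symmetric matrix with spectral decomposition S = ∑_k μ_k u_k u_kᵀ where |μ_1| ≥ … ≥ |μ_m|, and let r ≤ m. Then the truncation S_r = ∑_{k≤r} μ_k u_k u_kᵀ satisfies ‖S_r − S‖_F ≤ ‖X − S‖_F for every m×m matrix X with rank(X) ≤ r. -/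
open Matrix

/-- Frobenius norm of a real matrix. -/
noncomputable def frob {m n : ℕ} (A : Matrix (Fin m) (Fin n) ℝ) : ℝ :=
  Real.sqrt (∑ i, ∑ j, (A i j) ^ 2)

/- Auxiliary lemmas -/

lemma eym_card_filter_le {m r : ℕ} :
    (Finset.univ.filter (fun k : Fin m => r ≤ (k : ℕ))).card = m - r := by
  have h1 : (Finset.univ.filter (fun k : Fin m => r ≤ (k : ℕ))).card
      = ((Finset.range m).filter (fun k => r ≤ k)).card := by
    apply Finset.card_bij (fun (k : Fin m) _ => (k : ℕ))
    · intro a ha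
      simp only [Finset.mem_filter, Finset.mem_univ, true_and] at ha
      simp only [Finset.mem_filter, Finset.mem_range]
      exact ⟨a.isLt, ha⟩
    · intro a _ b _ h; exact Fin.ext h
    · intro b hb
      simp only [Finset.mem_filter, Finset.mem_range] at hb
      exact ⟨⟨b, hb.1⟩, by simp [hb.2], rfl⟩
  have h2 : (Finset.range m).filter (fun k => r ≤ k) = Finset.Ico r m := by
    ext x; simp [Finset.mem_Ico, and_comm]
  rw [h1, h2, Nat.card_Ico]

lemma eym_weight_bound {m r : ℕ} (hr : r ≤ m) (lam w : Fin m → ℝ)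
    (hlam0 : ∀ k, 0 ≤ lam k) (hlam : Antitone lam)
    (hw0 : ∀ k, 0 ≤ w k) (hw1 : ∀ k, w k ≤ 1)
    (hsum : (m : ℝ) - r ≤ ∑ k, w k) :
    ∑ k ∈ Finset.univ.filter (fun k : Fin m => r ≤ (k : ℕ)), lam k ≤ ∑ k, lam k * w k := by
  rcases eq_or_lt_of_le hr with h | hrm
  · subst h
    have he : Finset.univ.filter (fun k : Fin r => r ≤ (k : ℕ)) = ∅ := by
      ext k; simp [Nat.not_le.mpr k.isLt]
    rw [he]
    simp only [Finset.sum_empty]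
    exact Finset.sum_nonneg fun k _ => mul_nonneg (hlam0 k) (hw0 k)
  · set p : Fin m := ⟨r, hrm⟩ with hp
    set c := lam p with hc
    have hc0 : 0 ≤ c := hlam0 p
    set A := Finset.univ.filter (fun k : Fin m => (k : ℕ) < r) with hA
    set B := Finset.univ.filter (fun k : Fin m => r ≤ (k : ℕ)) with hB
    have hsplit : ∀ f : Fin m → ℝ, ∑ k, f k = ∑ k ∈ A, f k + ∑ k ∈ B, f k := by
      intro f
      rw [← Finset.sum_filter_add_sum_filter_not Finset.univ (fun k : Fin m => (k : ℕ) < r) f]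
      congr 1
      apply Finset.sum_congr _ (fun _ _ => rfl)
      apply Finset.filter_congr
      intro k _
      simp [Nat.not_lt]
    have hcard : (B.card : ℝ) = (m : ℝ) - r := by
      rw [hB, eym_card_filter_le, Nat.cast_sub hr]
    have hlamB : ∀ k ∈ B, lam k ≤ c := by
      intro k hk
      simp only [hB, Finset.mem_filter] at hk
      exact hlam (by simpa [hp, Fin.le_def] using hk.2)
    have hlamA : ∀ k ∈ A, c ≤ lam k := by
      intro k hk
      simp only [hA, Finset.mem_filter] at hk
      exact hlam (by simp [hp, Fin.le_def]; omega)
    have key1 : ∑ k ∈ B, lam k = ∑ k ∈ B, lam k * w k + ∑ k ∈ B, lam k * (1 - w k) := by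
      rw [← Finset.sum_add_distrib]
      exact Finset.sum_congr rfl fun k _ => by ring
    have key2 : ∑ k ∈ B, lam k * (1 - w k) ≤ c * ∑ k ∈ A, w k := by
      calc ∑ k ∈ B, lam k * (1 - w k) ≤ ∑ k ∈ B, c * (1 - w k) := by
            apply Finset.sum_le_sum
            intro k hk
            exact mul_le_mul_of_nonneg_right (hlamB k hk) (by linarith [hw1 k])
        _ = c * (B.card - ∑ k ∈ B, w k) := by
            simp only [mul_sub, mul_one, Finset.sum_sub_distrib, Finset.mul_sum,
              Finset.sum_const, nsmul_eq_mul, mul_comm]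
        _ ≤ c * ∑ k ∈ A, w k := by
            apply mul_le_mul_of_nonneg_left _ hc0
            have := hsplit w
            rw [hcard]
            linarith
    have key3 : c * ∑ k ∈ A, w k ≤ ∑ k ∈ A, lam k * w k := by
      rw [Finset.mul_sum]
      apply Finset.sum_le_sum
      intro k hk
      exact mul_le_mul_of_nonneg_right (hlamA k hk) (hw0 k)
    have := hsplit (fun k => lam k * w k)
    linarith

lemma eym_sq_sum_orth {m : ℕ} (u : Fin m → Fin m → ℝ)
    (horth : ∀ k l, u k ⬝ᵥ u l = if k = l then (1 : ℝ) else 0)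
    (B : Finset (Fin m)) (c : Fin m → ℝ) :
    ∑ j, (∑ k ∈ B, c k * u k j)^2 = ∑ k ∈ B, (c k)^2 := by
  calc ∑ j, (∑ k ∈ B, c k * u k j)^2
      = ∑ j, ∑ k ∈ B, ∑ l ∈ B, (c k * u k j) * (c l * u l j) := by
        refine Finset.sum_congr rfl fun j _ => ?_
        rw [sq, Finset.sum_mul_sum]
    _ = ∑ k ∈ B, ∑ l ∈ B, (c k * c l) * (u k ⬝ᵥ u l) := by
        rw [Finset.sum_comm]
        refine Finset.sum_congr rfl fun k _ => ?_
        rw [Finset.sum_comm]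
        refine Finset.sum_congr rfl fun l _ => ?_
        rw [dotProduct, Finset.mul_sum]
        refine Finset.sum_congr rfl fun j _ => by ring
    _ = ∑ k ∈ B, (c k)^2 := by
        refine Finset.sum_congr rfl fun k hk => ?_
        simp only [horth, mul_ite, mul_one, mul_zero]
        rw [Finset.sum_ite_eq B k]
        simp [hk, sq]

lemma eym_parseval {m : ℕ} (u : Fin m → Fin m → ℝ)
    (horth : ∀ k l, u k ⬝ᵥ u l = if k = l then (1 : ℝ) else 0)
    (x : Fin m → ℝ) :
    ∑ k, (u k ⬝ᵥ x)^2 = x ⬝ᵥ x := by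
  set U : Matrix (Fin m) (Fin m) ℝ := Matrix.of u with hU
  have h1 : U * Uᵀ = 1 := by
    ext k l
    simp only [Matrix.mul_apply, Matrix.transpose_apply, Matrix.one_apply]
    simpa [dotProduct, hU] using horth k l
  have h2 : Uᵀ * U = 1 := mul_eq_one_comm.mp h1
  have h3 : ∀ k, u k ⬝ᵥ x = (U *ᵥ x) k := fun k => rfl
  calc ∑ k, (u k ⬝ᵥ x)^2 = (U *ᵥ x) ⬝ᵥ (U *ᵥ x) := by
        simp only [h3, dotProduct, sq, Matrix.mulVec, Matrix.of_apply, hU]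
    _ = x ⬝ᵥ x := by
        rw [dotProduct_mulVec, ← Matrix.vecMul_transpose, Matrix.vecMul_vecMul, h2,
          Matrix.vecMul_one]

lemma eym_bessel_coords {m n : ℕ} (v : Fin n → EuclideanSpace ℝ (Fin m)) (hv : Orthonormal ℝ v)
    (x : Fin m → ℝ) :
    ∑ i, (∑ j, v i j * x j)^2 ≤ ∑ j, (x j)^2 := by
  have h := hv.sum_inner_products_le (s := Finset.univ) ((WithLp.equiv 2 (Fin m → ℝ)).symm x)
  have hn : ‖(WithLp.equiv 2 (Fin m → ℝ)).symm x‖ ^ 2 = ∑ j, (x j)^2 := by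
    rw [EuclideanSpace.norm_eq, Real.sq_sqrt (by positivity)]
    simp [sq_abs]
  rw [hn] at h
  refine le_trans (le_of_eq ?_) h
  refine Finset.sum_congr rfl fun i _ => ?_
  rw [PiLp.inner_apply]
  simp [sq_abs, RCLike.inner_apply, mul_comm]

lemma eym_exists_kernel_onb {m : ℕ} (X : Matrix (Fin m) (Fin m) ℝ) (r : ℕ) (h : X.rank ≤ r) :
    ∃ n : ℕ, m - r ≤ n ∧ ∃ v : Fin n → EuclideanSpace ℝ (Fin m),
      Orthonormal ℝ v ∧ ∀ i, X.mulVec (fun j => v i j) = 0 := by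
  have h1 := LinearMap.finrank_range_add_finrank_ker (Matrix.toEuclideanLin X)
  have h2 : Module.finrank ℝ (EuclideanSpace ℝ (Fin m)) = m := by simp
  have h3 : X.rank = Module.finrank ℝ (LinearMap.range (Matrix.toEuclideanLin X)) := by
    rw [Matrix.rank_eq_finrank_range_toLin X (PiLp.basisFun 2 ℝ (Fin m)) (PiLp.basisFun 2 ℝ (Fin m))]
    rfl
  set K := LinearMap.ker (Matrix.toEuclideanLin X) with hK
  refine ⟨Module.finrank ℝ K, by omega, ?_⟩
  let b := stdOrthonormalBasis ℝ K
  refine ⟨fun i => (b i : EuclideanSpace ℝ (Fin m)), ⟨?_, ?_⟩, ?_⟩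
  · intro i
    have := b.orthonormal.1 i
    rwa [Submodule.norm_coe]
  · intro i j hij
    simpa [Submodule.coe_inner] using b.orthonormal.2 hij
  · intro i
    have hb : (b i : EuclideanSpace ℝ (Fin m)) ∈ K := (b i).2
    have hb' : Matrix.toEuclideanLin X ((b i : EuclideanSpace ℝ (Fin m))) = 0 := hb
    rw [Matrix.toEuclideanLin_apply] at hb'
    have := congrArg (WithLp.equiv 2 (Fin m → ℝ)) hb'
    simpa using this

lemma eym_mulVec_decomp {m : ℕ} (μ : Fin m → ℝ) (u : Fin m → Fin m → ℝ) (y : Fin m → ℝ)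
    (j : Fin m) :
    ((∑ k, μ k • vecMulVec (u k) (u k)) *ᵥ y) j = ∑ k, (μ k * (u k ⬝ᵥ y)) * u k j := by
  simp only [Matrix.mulVec, dotProduct, Matrix.sum_apply, Matrix.smul_apply,
    Matrix.vecMulVec_apply, smul_eq_mul, Finset.sum_mul]
  rw [Finset.sum_comm]
  refine Finset.sum_congr rfl fun k _ => ?_
  rw [Finset.mul_sum, Finset.sum_mul]
  refine Finset.sum_congr rfl fun l _ => by ring

lemma eym_entry_sum_filter {m : ℕ} (μ : Fin m → ℝ) (u : Fin m → Fin m → ℝ) (B : Finset (Fin m))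
    (i j : Fin m) :
    (∑ k ∈ B, μ k • vecMulVec (u k) (u k)) i j = ∑ k ∈ B, (μ k * u k i) * u k j := by
  simp only [Matrix.sum_apply, Matrix.smul_apply, Matrix.vecMulVec_apply, smul_eq_mul]
  exact Finset.sum_congr rfl fun k _ => by ring

theorem eckart_young_mirsky_symmetric {m : ℕ}
    (S : Matrix (Fin m) (Fin m) ℝ) (hS : S.IsSymm)
    (μ : Fin m → ℝ) (u : Fin m → Fin m → ℝ)
    (horth : ∀ k l, u k ⬝ᵥ u l = if k = l then (1 : ℝ) else 0)
    (hdecomp : S = ∑ k, μ k • vecMulVec (u k) (u k))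
    (hord : Antitone fun k => |μ k|)
    (r : ℕ) (hr : r ≤ m) :
    ∀ X : Matrix (Fin m) (Fin m) ℝ, X.rank ≤ r →
      frob ((∑ k ∈ Finset.univ.filter (fun k : Fin m => (k : ℕ) < r),
          μ k • vecMulVec (u k) (u k)) - S) ≤ frob (X - S) := by
  intro X hX
  apply Real.sqrt_le_sqrt
  set B := Finset.univ.filter (fun k : Fin m => r ≤ (k : ℕ)) with hBdef
  -- rewrite the truncation error
  have hTS : (∑ k ∈ Finset.univ.filter (fun k : Fin m => (k : ℕ) < r),
      μ k • vecMulVec (u k) (u k)) - S = -(∑ k ∈ B, μ k • vecMulVec (u k) (u k)) := by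
    rw [hdecomp,
      ← Finset.sum_filter_add_sum_filter_not Finset.univ (fun k : Fin m => (k : ℕ) < r)]
    have hB2 : Finset.univ.filter (fun k : Fin m => ¬ (k : ℕ) < r) = B := by
      rw [hBdef]; apply Finset.filter_congr; intro k _; simp [Nat.not_lt]
    rw [hB2]
    abel
  have hLHS : ∑ i, ∑ j, (((∑ k ∈ Finset.univ.filter (fun k : Fin m => (k : ℕ) < r),
      μ k • vecMulVec (u k) (u k)) - S) i j)^2 = ∑ k ∈ B, (μ k)^2 := by
    rw [hTS]
    calc ∑ i, ∑ j, ((-(∑ k ∈ B, μ k • vecMulVec (u k) (u k))) i j)^2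
        = ∑ i, ∑ j, (∑ k ∈ B, (μ k * u k i) * u k j)^2 := by
          refine Finset.sum_congr rfl fun i _ => Finset.sum_congr rfl fun j _ => ?_
          rw [Matrix.neg_apply, neg_sq, eym_entry_sum_filter]
      _ = ∑ i, ∑ k ∈ B, (μ k * u k i)^2 := by
          refine Finset.sum_congr rfl fun i _ => ?_
          exact eym_sq_sum_orth u horth B (fun k => μ k * u k i)
      _ = ∑ k ∈ B, (μ k)^2 := by
          rw [Finset.sum_comm]
          refine Finset.sum_congr rfl fun k _ => ?_
          have h : ∑ i, (μ k * u k i)^2 = (μ k)^2 * (u k ⬝ᵥ u k) := by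
            rw [dotProduct, Finset.mul_sum]
            exact Finset.sum_congr rfl fun i _ => by ring
          rw [h, horth k k]
          simp
  rw [hLHS]
  obtain ⟨n, hn, v, hv, hvker⟩ := eym_exists_kernel_onb X r hX
  set w : Fin m → ℝ := fun k => ∑ i, (u k ⬝ᵥ (fun j => v i j))^2 with hwdef
  have step1 : ∑ k, (μ k)^2 * w k = ∑ i, ∑ j, (((X - S) *ᵥ (fun l => v i l)) j)^2 := by
    calc ∑ k, (μ k)^2 * w k = ∑ k, ∑ i, (μ k * (u k ⬝ᵥ fun j => v i j))^2 := by
          refine Finset.sum_congr rfl fun k _ => ?_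
          rw [hwdef, Finset.mul_sum]
          refine Finset.sum_congr rfl fun i _ => by ring
      _ = ∑ i, ∑ k, (μ k * (u k ⬝ᵥ fun j => v i j))^2 := Finset.sum_comm
      _ = ∑ i, ∑ j, ((S *ᵥ fun l => v i l) j)^2 := by
          refine Finset.sum_congr rfl fun i _ => ?_
          rw [← eym_sq_sum_orth u horth Finset.univ
            (fun k => μ k * (u k ⬝ᵥ fun j => v i j))]
          refine Finset.sum_congr rfl fun j _ => ?_
          rw [hdecomp, eym_mulVec_decomp]
      _ = ∑ i, ∑ j, (((X - S) *ᵥ fun l => v i l) j)^2 := by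
          refine Finset.sum_congr rfl fun i _ => Finset.sum_congr rfl fun j _ => ?_
          rw [Matrix.sub_mulVec, hvker i]
          simp
  have step2 : ∑ i, ∑ j, (((X - S) *ᵥ fun l => v i l) j)^2 ≤ ∑ i, ∑ j, ((X - S) i j)^2 := by
    calc ∑ i, ∑ j, (((X - S) *ᵥ fun l => v i l) j)^2
        = ∑ j, ∑ i, (∑ l, v i l * (X - S) j l)^2 := by
          rw [Finset.sum_comm]
          refine Finset.sum_congr rfl fun j _ => Finset.sum_congr rfl fun i _ => ?_
          have he : ((X - S) *ᵥ fun l => v i l) j = ∑ l, v i l * (X - S) j l := by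
            simp [Matrix.mulVec, dotProduct, mul_comm]
          rw [he]
      _ ≤ ∑ j, ∑ l, ((X - S) j l)^2 :=
          Finset.sum_le_sum fun j _ => eym_bessel_coords v hv (fun l => (X - S) j l)
      _ = ∑ i, ∑ j, ((X - S) i j)^2 := rfl
  have hw0 : ∀ k, 0 ≤ w k := fun k => Finset.sum_nonneg fun i _ => sq_nonneg _
  have hw1 : ∀ k, w k ≤ 1 := by
    intro k
    have h := eym_bessel_coords v hv (u k)
    have h2 : ∑ j, (u k j)^2 = 1 := by
      have hkk : u k ⬝ᵥ u k = 1 := by rw [horth k k]; simp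
      rw [← hkk, dotProduct]
      exact Finset.sum_congr rfl fun j _ => sq (u k j)
    rw [h2] at h
    refine le_trans (le_of_eq ?_) h
    rw [hwdef]
    refine Finset.sum_congr rfl fun i _ => ?_
    congr 1
    rw [dotProduct]
    exact Finset.sum_congr rfl fun j _ => mul_comm _ _
  have hsumw : (m : ℝ) - r ≤ ∑ k, w k := by
    have hval : ∑ k, w k = n := by
      rw [hwdef]
      calc ∑ k, ∑ i, (u k ⬝ᵥ fun j => v i j)^2
          = ∑ i : Fin n, ∑ k, (u k ⬝ᵥ fun j => v i j)^2 := Finset.sum_comm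
        _ = ∑ i : Fin n, (1 : ℝ) := by
            refine Finset.sum_congr rfl fun i _ => ?_
            rw [eym_parseval u horth]
            have hnorm := hv.1 i
            rw [EuclideanSpace.norm_eq] at hnorm
            have h3 : ∑ j, (v i j)^2 = 1 := by
              have := congrArg (· ^ 2) hnorm
              simp only [Real.sq_sqrt (by positivity : (0:ℝ) ≤ ∑ j, ‖v i j‖^2)] at this
              simpa [sq_abs] using this
            rw [dotProduct, ← h3]
            exact Finset.sum_congr rfl fun j _ => by rw [sq]
        _ = n := by simp
    rw [hval]
    have : ((m - r : ℕ) : ℝ) ≤ (n : ℝ) := Nat.cast_le.mpr hn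
    rw [Nat.cast_sub hr] at this
    exact this
  have hanti : Antitone (fun k : Fin m => (μ k)^2) := by
    intro a b hab
    simp only
    calc (μ b)^2 = |μ b|^2 := (sq_abs _).symm
      _ ≤ |μ a|^2 := pow_le_pow_left₀ (abs_nonneg _) (hord hab) 2
      _ = (μ a)^2 := sq_abs _
  have hfinal := eym_weight_bound hr (fun k => (μ k)^2) w
    (fun k => sq_nonneg _) hanti hw0 hw1 hsumw
  rw [hBdef]
  calc ∑ k ∈ Finset.univ.filter (fun k : Fin m => r ≤ (k : ℕ)), (μ k)^2
      ≤ ∑ k, (μ k)^2 * w k := hfinal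
    _ = ∑ i, ∑ j, (((X - S) *ᵥ fun l => v i l) j)^2 := step1
    _ ≤ ∑ i, ∑ j, ((X - S) i j)^2 := step2
end

section
/- Let M be an m×m symmetric positive definite matrix with eigenvalues λ_1 ≥ … ≥ λ_m > 0 and orthonormal eigenvectors u_1,…,u_m, let r < m and 0 ≤ ε² < (λ_r + λ_m)/2. Set P = [u_1,…,u_r], L = diag(λ_1 − ε², …, λ_r − ε²). Then ‖PLPᵀ + ε²I − M‖_F² = ∑_{k=r+1}^{m} (λ_k − ε²)², and this is strictly smaller than ∑_{k=r+1}^{m} λ_k² whenever 0 < ε² < 2λ_m. -/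
open Matrix

lemma complete_aux {m : ℕ} (u : Fin m → Fin m → ℝ)
    (horth : ∀ k l, u k ⬝ᵥ u l = if k = l then (1 : ℝ) else 0) :
    (∑ k, vecMulVec (u k) (u k)) = (1 : Matrix (Fin m) (Fin m) ℝ) := by
  have h1 : (Matrix.of u) * (Matrix.of u)ᵀ = 1 := by
    ext k l
    simpa [Matrix.mul_apply, dotProduct, Matrix.one_apply] using horth k l
  have h2 : (Matrix.of u)ᵀ * (Matrix.of u) = 1 := mul_eq_one_comm.mp h1
  ext i j
  have := congrFun (congrFun h2 i) j
  simpa [Matrix.mul_apply, Matrix.sum_apply, vecMulVec_apply, mul_comm] using this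

lemma key_sum {m : ℕ} (u : Fin m → Fin m → ℝ)
    (horth : ∀ k l, u k ⬝ᵥ u l = if k = l then (1 : ℝ) else 0) (c : Fin m → ℝ) :
    ∑ i, ∑ j, (∑ k, c k * (u k i * u k j)) ^ 2 = ∑ k, (c k) ^ 2 := by
  have h1 : ∀ i j : Fin m, (∑ k, c k * (u k i * u k j)) ^ 2
      = ∑ k, ∑ l, (c k * c l) * ((u k i * u l i) * (u k j * u l j)) := by
    intro i j
    rw [sq, Finset.sum_mul_sum]
    exact Finset.sum_congr rfl fun k _ => Finset.sum_congr rfl fun l _ => by ring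
  simp_rw [h1]
  calc ∑ i : Fin m, ∑ j : Fin m, ∑ k : Fin m, ∑ l : Fin m,
        (c k * c l) * ((u k i * u l i) * (u k j * u l j))
      = ∑ i : Fin m, ∑ k : Fin m, ∑ l : Fin m, ∑ j : Fin m,
        (c k * c l) * ((u k i * u l i) * (u k j * u l j)) :=
        Finset.sum_congr rfl fun i _ => by
          rw [Finset.sum_comm]
          exact Finset.sum_congr rfl fun k _ => Finset.sum_comm
    _ = ∑ k : Fin m, ∑ i : Fin m, ∑ l : Fin m, ∑ j : Fin m,
        (c k * c l) * ((u k i * u l i) * (u k j * u l j)) := Finset.sum_comm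
    _ = ∑ k : Fin m, ∑ l : Fin m, ∑ i : Fin m, ∑ j : Fin m,
        (c k * c l) * ((u k i * u l i) * (u k j * u l j)) :=
        Finset.sum_congr rfl fun k _ => Finset.sum_comm
    _ = ∑ k : Fin m, ∑ l : Fin m, (c k * c l) * ((u k ⬝ᵥ u l) * (u k ⬝ᵥ u l)) := by
        refine Finset.sum_congr rfl fun k _ => Finset.sum_congr rfl fun l _ => ?_
        simp only [dotProduct, Finset.mul_sum, Finset.sum_mul]
        refine Finset.sum_congr rfl fun i _ => Finset.sum_congr rfl fun j _ => by ring
    _ = ∑ k, (c k) ^ 2 := by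
        refine Finset.sum_congr rfl fun k _ => ?_
        rw [Finset.sum_eq_single k]
        · simp [horth k k, sq]
        · intro l _ hl
          simp [horth k l, (Ne.symm hl : k ≠ l)]
        · simp

theorem nugget_truncation_residual {m : ℕ}
    (M : Matrix (Fin m) (Fin m) ℝ) (hM : M.PosDef)
    (lam : Fin m → ℝ) (u : Fin m → Fin m → ℝ)
    (horth : ∀ k l, u k ⬝ᵥ u l = if k = l then (1 : ℝ) else 0)
    (hdecomp : M = ∑ k, lam k • vecMulVec (u k) (u k))
    (hmono : Antitone lam) (hpos : ∀ k, 0 < lam k)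
    (r : ℕ) (hr : 0 < r) (hrm : r < m)
    (ε2 : ℝ) (hε0 : 0 ≤ ε2)
    (hε : ε2 < (lam ⟨r - 1, by omega⟩ + lam ⟨m - 1, by omega⟩) / 2) :
    let R := (∑ k ∈ Finset.univ.filter (fun k : Fin m => (k : ℕ) < r),
          (lam k - ε2) • vecMulVec (u k) (u k))
        + ε2 • (1 : Matrix (Fin m) (Fin m) ℝ) - M
    (frob R) ^ 2 =
        (∑ k ∈ Finset.univ.filter (fun k : Fin m => r ≤ (k : ℕ)), (lam k - ε2) ^ 2) ∧
      (0 < ε2 → ε2 < 2 * lam ⟨m - 1, by omega⟩ →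
        (frob R) ^ 2 <
          ∑ k ∈ Finset.univ.filter (fun k : Fin m => r ≤ (k : ℕ)), (lam k) ^ 2) := by
  intro R
  set c : Fin m → ℝ := fun k => if (k : ℕ) < r then 0 else ε2 - lam k with hc
  -- entrywise formula for R
  have hR : ∀ i j, R i j = ∑ k, c k * (u k i * u k j) := by
    intro i j
    have hI := complete_aux u horth
    have : R = ∑ k, c k • vecMulVec (u k) (u k) := by
      show (∑ k ∈ Finset.univ.filter (fun k : Fin m => (k : ℕ) < r),
          (lam k - ε2) • vecMulVec (u k) (u k))
        + ε2 • (1 : Matrix (Fin m) (Fin m) ℝ) - M = _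
      rw [hdecomp, ← hI, Finset.smul_sum, Finset.sum_filter, ← Finset.sum_add_distrib,
        ← Finset.sum_sub_distrib]
      refine Finset.sum_congr rfl fun k _ => ?_
      by_cases hk : (k : ℕ) < r <;> simp [hc, hk, sub_smul, add_smul, smul_smul] <;> module
    rw [this]
    simp [Matrix.sum_apply, vecMulVec_apply, mul_assoc]
  have hnonneg : (0:ℝ) ≤ ∑ i, ∑ j, (R i j) ^ 2 :=
    Finset.sum_nonneg fun i _ => Finset.sum_nonneg fun j _ => sq_nonneg _
  have hfrob : (frob R) ^ 2 = ∑ k, (c k) ^ 2 := by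
    rw [frob, Real.sq_sqrt hnonneg]
    simp_rw [hR]
    exact key_sum u horth c
  have hsum : ∑ k, (c k) ^ 2
      = ∑ k ∈ Finset.univ.filter (fun k : Fin m => r ≤ (k : ℕ)), (lam k - ε2) ^ 2 := by
    rw [Finset.sum_filter]
    refine Finset.sum_congr rfl fun k _ => ?_
    by_cases hk : (k : ℕ) < r
    · simp [hc, hk, Nat.not_le.mpr hk]
    · rw [hc]
      simp only [if_neg hk, if_pos (Nat.le_of_not_lt hk)]
      ring
  refine ⟨hfrob.trans hsum, fun hε2pos hε2lt => ?_⟩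
  rw [hfrob, hsum]
  refine Finset.sum_lt_sum_of_nonempty ⟨⟨r, hrm⟩, by simp⟩ fun k hk => ?_
  have hk' : lam ⟨m - 1, by omega⟩ ≤ lam k := by
    apply hmono
    simp [Fin.le_def]
    omega
  nlinarith [hpos k]
end
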